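/- Let p > 2 and let (w_m)_{m∈ℕ} be a sequence in (0,1] with w_m → 0, and let Y_3 be the corresponding space on (ℕ×ℕ)³ with norm given by the family 𝒫_3 = {(P_I, W_I) : I ⊆ {1,2,3}}. Let |||·||| be the envelope norm generated by 𝒫_3. Then sup{ |||x||| / ‖x‖_{Y_3} : x ∈ Y_3, x ≠ 0 } ≥ 3^{1/p}. -/

import Mathlib

open scoped ENNReal
open MeasureTheory Filter

noncomputable section

variable {α : Type*}

/-- `P` is a partition of the type `α`: a collection of pairwise disjoint
nonempty subsets of `α` whose union is all of `α`. -/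
def IsPartition (P : Set (Set α)) : Prop :=
  (∀ N ∈ P, N.Nonempty) ∧ P.PairwiseDisjoint id ∧ ⋃₀ P = Set.univ

/-- A weight function takes values in `(0,1]`. -/
def IsWeight (W : α → ℝ) : Prop := ∀ a, W a ∈ Set.Ioc (0 : ℝ) 1

/-- `‖x‖_{P,W} = (Σ_{N∈P} (Σ_{j∈N} x_j² w_j²)^{p/2})^{1/p}`, valued in `[0,∞]`. -/
def pwNorm (p : ℝ) (P : Set (Set α)) (W : α → ℝ) (x : α → ℝ) : ℝ≥0∞ :=
  (∑' N : P, (∑' j : N.1, ENNReal.ofReal ((x j.1) ^ 2 * (W j.1) ^ 2)) ^ (p / 2)) ^ (1 / p)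

/-- A partition–weight pair on `α`. -/
abbrev PWPair (α : Type*) := Set (Set α) × (α → ℝ)

/-- Every member of the family is a genuine partition–weight pair. -/
def IsPWFamily (𝒞 : Set (PWPair α)) : Prop :=
  ∀ PW ∈ 𝒞, IsPartition PW.1 ∧ IsWeight PW.2

/-- `‖x‖_𝒞 = sup_{(P,W) ∈ 𝒞} ‖x‖_{P,W}`. -/
def famNorm (p : ℝ) (𝒞 : Set (PWPair α)) (x : α → ℝ) : ℝ≥0∞ :=
  ⨆ PW ∈ 𝒞, pwNorm p PW.1 PW.2 x

/-- The block of the partition `Q` containing `b` (for a genuine partition this is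
the unique element of `Q` containing `b`). -/
def blockOf (Q : Set (Set α)) (b : α) : Set α := ⋃₀ {q ∈ Q | b ∈ q}

/-- The partition `P(Q,T)` obtained from a partition `Q` and a choice `T` of a
partition–weight pair for each block of `Q`. -/
def envPartition (Q : Set (Set α)) (T : Set α → PWPair α) : Set (Set α) :=
  {K | K.Nonempty ∧ ∃ q ∈ Q, ∃ s ∈ (T q).1, K = q ∩ s}

/-- The weight `W(Q,T)`: on the block `q` of `Q` it is the weight chosen by `T q`. -/
def envWeight (Q : Set (Set α)) (T : Set α → PWPair α) : α → ℝ :=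
  fun b => (T (blockOf Q b)).2 b

/-- A family of partition–weight pairs satisfies the envelope property if it is
closed under the operation `(Q, T) ↦ (P(Q,T), W(Q,T))`. -/
def EnvelopeProp (𝒞 : Set (PWPair α)) : Prop :=
  ∀ Q : Set (Set α), IsPartition Q → ∀ T : Set α → PWPair α, (∀ q ∈ Q, T q ∈ 𝒞) →
    (envPartition Q T, envWeight Q T) ∈ 𝒞

/-- The family `𝒞̃` of all pairs `(P(Q,T), W(Q,T))`. -/
def envFam (𝒞 : Set (PWPair α)) : Set (PWPair α) :=
  {PW | ∃ Q T, IsPartition Q ∧ (∀ q ∈ Q, T q ∈ 𝒞) ∧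
    PW = (envPartition Q T, envWeight Q T)}

/-- The envelope norm generated by `𝒞`. -/
def envNorm (p : ℝ) (𝒞 : Set (PWPair α)) (x : α → ℝ) : ℝ≥0∞ := famNorm p (envFam 𝒞) x

/-- The index set `(ℕ×ℕ)^n`. -/
abbrev BIdx (n : ℕ) := Fin n → ℕ × ℕ

/-- The partition `P_I` of `(ℕ×ℕ)^n` into the sets obtained by fixing the coordinates
`i_k` for `k ∈ I` and letting the others range over all of `ℕ × ℕ`. -/
def PI {n : ℕ} (I : Finset (Fin n)) : Set (Set (BIdx n)) :=
  {S | ∃ g : Fin n → ℕ × ℕ, S = {i : BIdx n | ∀ k ∈ I, i k = g k}}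

/-- The weight `W_I(i) = Π_{k∉I} w_{i_k}`, where `w_{(m,l)} = w_m`. -/
def WI (w : ℕ → ℝ) {n : ℕ} (I : Finset (Fin n)) : BIdx n → ℝ :=
  fun i => ∏ k ∈ Iᶜ, w (i k).1

/-- The family of partition–weight pairs `{(P_I, W_I) : I ⊆ {1,…,n}}` defining `Y_n`. -/
def famYn (w : ℕ → ℝ) (n : ℕ) : Set (PWPair (BIdx n)) :=
  Set.range fun I : Finset (Fin n) => (PI I, WI w I)

/-- The norm of `Y_n`:  `max_{I ⊆ {1,…,n}} ‖x‖_{P_I,W_I}`. -/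
def Ynorm (p : ℝ) (w : ℕ → ℝ) (n : ℕ) (x : BIdx n → ℝ) : ℝ≥0∞ :=
  famNorm p (famYn w n) x


namespace S16

/-! ### Generic summation lemmas -/

lemma tsum_ind_const_le {γ : Type*} [Fintype γ] (A : Set α) (C : ℝ≥0∞)
    (φ : α → γ) (hφ : Set.InjOn φ A) :
    ∑' j : α, A.indicator (fun _ => C) j ≤ (Fintype.card γ : ℝ≥0∞) * C := by
  rw [← tsum_subtype]
  have hinj : Function.Injective (fun a : A => φ a.1) :=
    fun a b h => Subtype.ext (hφ a.2 b.2 h)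
  calc ∑' _ : A, C = ∑' a : A, (fun _ : γ => C) ((fun a : A => φ a.1) a) := rfl
    _ ≤ ∑' _ : γ, C := ENNReal.tsum_comp_le_tsum_of_injective hinj _
    _ = (Fintype.card γ : ℝ≥0∞) * C := by
        rw [tsum_fintype]
        simp [Finset.sum_const, nsmul_eq_mul]

lemma tsum_blocks_le (P : Set (Set α)) (hP : P.PairwiseDisjoint id) (f : α → ℝ≥0∞) :
    ∑' N : P, ∑' j : (N : Set α), f j ≤ ∑' j, f j := by
  calc ∑' N : P, ∑' j : (N : Set α), f j
      = ∑' (N : P) (j : α), (N : Set α).indicator f j :=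
        tsum_congr fun N => tsum_subtype _ f
    _ = ∑' (j : α) (N : P), (N : Set α).indicator f j := ENNReal.tsum_comm
    _ ≤ ∑' j, f j := by
        refine ENNReal.tsum_le_tsum fun j => ?_
        by_cases h : ∃ N : P, j ∈ (N : Set α)
        · obtain ⟨N0, hN0⟩ := h
          rw [tsum_eq_single N0]
          · exact Set.indicator_le_self _ _ j
          · intro N hN
            refine Set.indicator_of_notMem (fun hj => hN ?_) _
            exact Subtype.ext (hP.elim_set N.2 N0.2 j hj hN0)
        · push_neg at h
          have : ∀ N : P, (N : Set α).indicator f j = 0 :=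
            fun N => Set.indicator_of_notMem (h N) _
          simp [this]

lemma powsum_le (P : Set (Set α)) (hP : P.PairwiseDisjoint id) (f : α → ℝ≥0∞)
    {q : ℝ} (hq : 1 ≤ q) {M : ℝ≥0∞} (hM : M ≠ ⊤)
    (hblock : ∀ N : P, ∑' j : (N : Set α), f j ≤ M) :
    ∑' N : P, (∑' j : (N : Set α), f j) ^ q ≤ M ^ (q - 1) * ∑' j, f j := by
  calc ∑' N : P, (∑' j : (N : Set α), f j) ^ q
      ≤ ∑' N : P, M ^ (q - 1) * ∑' j : (N : Set α), f j := by
        refine ENNReal.tsum_le_tsum fun N => ?_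
        set a := ∑' j : (N : Set α), f j with ha
        rcases eq_or_ne a 0 with h0 | h0
        · rw [h0, ENNReal.zero_rpow_of_pos (by linarith)]
          exact zero_le
        · have hfin : a ≠ ⊤ := ne_top_of_le_ne_top hM (hblock N)
          have : a ^ q = a ^ (q - 1) * a := by
            rw [show q = (q - 1) + 1 by ring, ENNReal.rpow_add _ _ h0 hfin,
              ENNReal.rpow_one]
            ring_nf
          rw [this]
          exact mul_le_mul' (ENNReal.rpow_le_rpow (hblock N) (by linarith)) le_rfl
    _ = M ^ (q - 1) * ∑' N : P, ∑' j : (N : Set α), f j := ENNReal.tsum_mul_left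
    _ ≤ M ^ (q - 1) * ∑' j, f j := mul_le_mul' le_rfl (tsum_blocks_le P hP f)

/-! ### Facts about the partitions `P_I` -/

lemma PI_pairwiseDisjoint {n : ℕ} (I : Finset (Fin n)) : (PI I).PairwiseDisjoint id := by
  rintro N hN N' hN' hne
  obtain ⟨g, rfl⟩ := hN
  obtain ⟨g', rfl⟩ := hN'
  refine Set.disjoint_left.2 fun i hi hi' => hne ?_
  simp only [id_eq, Set.mem_setOf_eq] at *
  ext j
  constructor <;> intro hj <;> intro k hk
  · rw [hj k hk, ← hi k hk, hi' k hk]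
  · rw [hj k hk, ← hi' k hk, hi k hk]

/-! ### The construction -/

/-- The support of the `r`-th piece. -/
def SS (m L : ℕ) (r : Fin 3) : Set (BIdx 3) :=
  {i | i r = (m, 0) ∧ ∀ k, k ≠ r → (i k).1 = 0 ∧ (i k).2 < L}

/-- The vector `x`. -/
def xx (c : ℝ) (m L : ℕ) : BIdx 3 → ℝ := (⋃ r, SS m L r).indicator fun _ => c

lemma SS_first {m L : ℕ} {r k : Fin 3} {i : BIdx 3} (hi : i ∈ SS m L r) :
    (i k).1 = if k = r then m else 0 := by
  rcases eq_or_ne k r with rfl | hk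
  · simp [hi.1]
  · simp [hk, (hi.2 k hk).1]

lemma SS_disjoint {m L : ℕ} (hm : m ≠ 0) {r r' : Fin 3} (h : r ≠ r') {i : BIdx 3}
    (hi : i ∈ SS m L r) (hi' : i ∈ SS m L r') : False := by
  have h1 : (i r).1 = m := by rw [hi.1]
  have h2 : (i r).1 = 0 := (hi'.2 r h).1
  exact hm (h1.symm.trans h2)

lemma xx_of_mem {c : ℝ} {m L : ℕ} {r : Fin 3} {i : BIdx 3} (hi : i ∈ SS m L r) :
    xx c m L i = c :=
  Set.indicator_of_mem (Set.mem_iUnion.2 ⟨r, hi⟩) _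



/-! ### Constants -/

/-- The weight profile of the `r`-th piece in coordinate `k`. -/
def wS (w : ℕ → ℝ) (m : ℕ) (r k : Fin 3) : ℝ := if k = r then w m else w 0

/-- The constant value of `x_j² W_I(j)²` on the `r`-th piece. -/
def CR (w : ℕ → ℝ) (c : ℝ) (m : ℕ) (r : Fin 3) (I : Finset (Fin 3)) : ℝ :=
  c ^ 2 * (∏ k ∈ Iᶜ, wS w m r k) ^ 2

lemma WI_on_SS {w : ℕ → ℝ} {m L : ℕ} {r : Fin 3} {i : BIdx 3} (hi : i ∈ SS m L r)
    (I : Finset (Fin 3)) : WI w I i = ∏ k ∈ Iᶜ, wS w m r k := by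
  refine Finset.prod_congr rfl fun k _ => ?_
  rw [SS_first hi, apply_ite w, wS]

lemma f_eq {w : ℕ → ℝ} {c : ℝ} {m L : ℕ} (hm : m ≠ 0) (I : Finset (Fin 3)) (j : BIdx 3) :
    ENNReal.ofReal (xx c m L j ^ 2 * WI w I j ^ 2)
      = ∑ r : Fin 3, (SS m L r).indicator
          (fun _ => ENNReal.ofReal (CR w c m r I)) j := by
  by_cases hj : j ∈ ⋃ r, SS m L r
  · obtain ⟨r, hr⟩ := Set.mem_iUnion.1 hj
    rw [Finset.sum_eq_single r]
    · rw [Set.indicator_of_mem hr, xx_of_mem hr, WI_on_SS hr, CR]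
    · intro r' _ hr'
      exact Set.indicator_of_notMem (fun h => SS_disjoint hm hr' h hr) _
    · intro h
      exact absurd (Finset.mem_univ r) h
  · have hx : xx c m L j = 0 := Set.indicator_of_notMem hj _
    have h0 : ∀ r : Fin 3,
        (SS m L r).indicator (fun _ => ENNReal.ofReal (CR w c m r I)) j = 0 := fun r =>
      Set.indicator_of_notMem (fun h => hj (Set.mem_iUnion.2 ⟨r, h⟩)) _
    simp [hx, h0]

/-! ### Counting the support inside a block -/

lemma count_bound {m L : ℕ} (hL : 0 < L) (g : BIdx 3) (J : Finset (Fin 3)) (r : Fin 3)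
    (C : ℝ≥0∞) :
    ∑' j : BIdx 3, ({i : BIdx 3 | ∀ k ∈ J, i k = g k} ∩ SS m L r).indicator
        (fun _ => C) j ≤ C * (L : ℝ≥0∞) ^ (3 - (insert r J).card) := by
  classical
  set A := {i : BIdx 3 | ∀ k ∈ J, i k = g k} ∩ SS m L r with hA
  have hφ : Set.InjOn
      (fun (i : BIdx 3) (k : {k : Fin 3 // k ∉ insert r J}) =>
        (⟨(i k.1).2 % L, Nat.mod_lt _ hL⟩ : Fin L)) A := by
    intro i hi i' hi' h
    funext k
    by_cases hk : k ∈ insert r J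
    · rcases Finset.mem_insert.1 hk with rfl | hkJ
      · rw [hi.2.1, hi'.2.1]
      · rw [hi.1 k hkJ, hi'.1 k hkJ]
    · have hkr : k ≠ r := fun e => hk (by simp [e])
      have h1 := hi.2.2 k hkr
      have h1' := hi'.2.2 k hkr
      have h2 : (i k).2 = (i' k).2 := by
        have h3 := congrFun h ⟨k, hk⟩
        simp only [Fin.mk.injEq] at h3
        rwa [Nat.mod_eq_of_lt h1.2, Nat.mod_eq_of_lt h1'.2] at h3
      exact Prod.ext (h1.1.trans h1'.1.symm) h2
  have hcard : (Fintype.card ({k : Fin 3 // k ∉ insert r J} → Fin L) : ℝ≥0∞)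
      = (L : ℝ≥0∞) ^ (3 - (insert r J).card) := by
    have h3 : Fintype.card ({k : Fin 3 // k ∉ insert r J} → Fin L)
        = L ^ (3 - (insert r J).card) := by
      rw [Fintype.card_fun, Fintype.card_fin]
      congr 1
      rw [Fintype.card_subtype_compl (p := fun k => k ∈ insert r J)]
      congr 1
      exact Fintype.card_coe _
    rw [h3]
    push_cast
    rfl
  calc ∑' j : BIdx 3, A.indicator (fun _ => C) j
      ≤ (Fintype.card ({k : Fin 3 // k ∉ insert r J} → Fin L) : ℝ≥0∞) * C :=
        tsum_ind_const_le A C _ hφ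
    _ = C * (L : ℝ≥0∞) ^ (3 - (insert r J).card) := by rw [hcard, mul_comm]

/-- Bound for the inner sum of any block of `P_J`, with weight `W_I`. -/
lemma inner_le {w : ℕ → ℝ} {c : ℝ} {m L : ℕ} (hm : m ≠ 0) (hL : 0 < L)
    (I J : Finset (Fin 3)) {N : Set (BIdx 3)} (hN : N ∈ PI J) :
    ∑' j : N, ENNReal.ofReal (xx c m L j ^ 2 * WI w I j ^ 2)
      ≤ ∑ r : Fin 3, ENNReal.ofReal (CR w c m r I)
          * (L : ℝ≥0∞) ^ (3 - (insert r J).card) := by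
  obtain ⟨g, rfl⟩ := hN
  rw [tsum_subtype {i : BIdx 3 | ∀ k ∈ J, i k = g k}
    (fun j => ENNReal.ofReal (xx c m L j ^ 2 * WI w I j ^ 2))]
  have hpt : ∀ j : BIdx 3,
      ({i : BIdx 3 | ∀ k ∈ J, i k = g k}).indicator
        (fun j => ENNReal.ofReal (xx c m L j ^ 2 * WI w I j ^ 2)) j
      = ∑ r : Fin 3, ({i : BIdx 3 | ∀ k ∈ J, i k = g k} ∩ SS m L r).indicator
          (fun _ => ENNReal.ofReal (CR w c m r I)) j := by
    intro j
    by_cases hjB : j ∈ {i : BIdx 3 | ∀ k ∈ J, i k = g k}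
    · rw [Set.indicator_of_mem hjB, f_eq hm I j]
      refine Finset.sum_congr rfl fun r _ => ?_
      rw [← Set.indicator_indicator, Set.indicator_of_mem hjB]
    · rw [Set.indicator_of_notMem hjB]
      symm
      refine Finset.sum_eq_zero fun r _ => ?_
      exact Set.indicator_of_notMem (fun h => hjB h.1) _
  calc ∑' j : BIdx 3, ({i : BIdx 3 | ∀ k ∈ J, i k = g k}).indicator
        (fun j => ENNReal.ofReal (xx c m L j ^ 2 * WI w I j ^ 2)) j
      = ∑' j : BIdx 3, ∑ r : Fin 3,
          ({i : BIdx 3 | ∀ k ∈ J, i k = g k} ∩ SS m L r).indicator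
            (fun _ => ENNReal.ofReal (CR w c m r I)) j := tsum_congr hpt
    _ = ∑ r : Fin 3, ∑' j : BIdx 3,
          ({i : BIdx 3 | ∀ k ∈ J, i k = g k} ∩ SS m L r).indicator
            (fun _ => ENNReal.ofReal (CR w c m r I)) j :=
        Summable.tsum_finsetSum fun _ _ => ENNReal.summable
    _ ≤ _ := Finset.sum_le_sum fun r _ => count_bound hL g J r _

/-- Bound for the total sum, with weight `W_I`. -/
lemma total_le {w : ℕ → ℝ} {c : ℝ} {m L : ℕ} (hm : m ≠ 0) (hL : 0 < L)
    (I : Finset (Fin 3)) :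
    ∑' j : BIdx 3, ENNReal.ofReal (xx c m L j ^ 2 * WI w I j ^ 2)
      ≤ ∑ r : Fin 3, ENNReal.ofReal (CR w c m r I) * (L : ℝ≥0∞) ^ 2 := by
  have huniv : (Set.univ : Set (BIdx 3)) ∈ PI (∅ : Finset (Fin 3)) := by
    refine ⟨fun _ => (0, 0), ?_⟩
    ext i
    simp
  have h := inner_le (w := w) (c := c) hm hL I ∅ huniv
  rw [tsum_univ (fun j => ENNReal.ofReal (xx c m L j ^ 2 * WI w I j ^ 2))] at h
  simpa using h

/-! ### Real-number estimates -/

lemma prod_ite_of_mem {a β : ℝ} {s : Finset (Fin 3)} {r : Fin 3} (hr : r ∈ s) :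
    ∏ k ∈ s, (if k = r then a else β) = a * β ^ (s.card - 1) := by
  rw [← Finset.mul_prod_erase s _ hr, if_pos rfl]
  congr 1
  rw [Finset.prod_congr rfl (fun k hk => if_neg (Finset.ne_of_mem_erase hk)),
    Finset.prod_const, Finset.card_erase_of_mem hr]

lemma prod_ite_of_not_mem {a β : ℝ} {s : Finset (Fin 3)} {r : Fin 3} (hr : r ∉ s) :
    ∏ k ∈ s, (if k = r then a else β) = β ^ s.card := by
  rw [Finset.prod_congr rfl (fun k hk => if_neg (by rintro rfl; exact hr hk)),
    Finset.prod_const]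

set_option maxHeartbeats 1000000 in
lemma numeric_bound {w : ℕ → ℝ} {m L : ℕ} {q ε : ℝ}
    (hw : IsWeight w) (hq : 1 < q) (hε : 0 < ε) (hε2 : ε ≤ 1 / 2)
    (ha : w m ≤ ε * w 0) (hL1 : 1 ≤ (L : ℝ))
    (hcond : (3 * (((w 0 ^ 2 * (L : ℝ))⁻¹) ^ 2 * (L : ℝ))) ^ (q - 1)
        * (3 * (((w 0 ^ 2 * (L : ℝ))⁻¹) ^ 2 * (L : ℝ) ^ 2)) ≤ ε)
    (I : Finset (Fin 3)) :
    (∑ r : Fin 3, CR w ((w 0 ^ 2 * (L : ℝ))⁻¹) m r I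
        * (L : ℝ) ^ (3 - (insert r I).card)) ^ (q - 1)
      * (∑ r : Fin 3, CR w ((w 0 ^ 2 * (L : ℝ))⁻¹) m r I * (L : ℝ) ^ 2)
      ≤ (1 + 2 * ε ^ 2) ^ q := by
  classical
  set β : ℝ := w 0 with hβdef
  set a : ℝ := w m with hadef
  set c : ℝ := (β ^ 2 * (L : ℝ))⁻¹ with hcdef
  have hwSr : ∀ r k : Fin 3, wS w m r k = if k = r then a else β := fun _ _ => rfl
  clear_value β a c
  have hβ : 0 < β ∧ β ≤ 1 := hβdef ▸ hw 0
  have haw : 0 < a ∧ a ≤ 1 := hadef ▸ hw m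
  have hL0 : (0 : ℝ) < L := by linarith
  have hc0 : 0 < c := by
    rw [hcdef]
    exact inv_pos.2 (mul_pos (pow_pos hβ.1 2) hL0)
  have hβ0 : β ≠ 0 := ne_of_gt hβ.1
  have hL0' : (L : ℝ) ≠ 0 := ne_of_gt hL0
  have key1 : c ^ 2 * (β ^ 2) ^ 2 * (L : ℝ) ^ 2 = 1 := by
    rw [hcdef]
    field_simp
  have hRHS1 : (1 : ℝ) ≤ (1 + 2 * ε ^ 2) ^ q :=
    Real.one_le_rpow (by nlinarith) (by linarith)
  have haεβ : a ≤ ε * β := ha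
  -- the three cases
  by_cases hI0 : I = ∅
  · subst hI0
    have hterm : ∀ r : Fin 3, CR w c m r (∅ : Finset (Fin 3)) = c ^ 2 * (a * β ^ 2) ^ 2 := by
      intro r
      rw [CR, Finset.compl_empty, Finset.prod_congr rfl fun k _ => hwSr r k,
        prod_ite_of_mem (Finset.mem_univ r)]
      simp [Finset.card_univ]
    have hexp : ∀ r : Fin 3, 3 - (insert r (∅ : Finset (Fin 3))).card = 2 := by
      intro r; simp
    have hsum1 : (∑ r : Fin 3, CR w c m r (∅ : Finset (Fin 3))
        * (L : ℝ) ^ (3 - (insert r (∅ : Finset (Fin 3))).card)) = 3 * a ^ 2 := by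
      rw [Finset.sum_congr rfl fun r _ => by rw [hterm r, hexp r]]
      rw [Finset.sum_const]
      simp only [Finset.card_univ, Fintype.card_fin, nsmul_eq_mul]
      push_cast
      linear_combination (3 * a ^ 2) * key1
    have hsum2 : (∑ r : Fin 3, CR w c m r (∅ : Finset (Fin 3)) * (L : ℝ) ^ 2)
        = 3 * a ^ 2 := by
      rw [Finset.sum_congr rfl fun r _ => by rw [hterm r]]
      rw [Finset.sum_const]
      simp only [Finset.card_univ, Fintype.card_fin, nsmul_eq_mul]
      push_cast
      linear_combination (3 * a ^ 2) * key1
    rw [hsum1, hsum2]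
    have h3a : 0 < 3 * a ^ 2 := by nlinarith [haw.1]
    have ha12 : a ≤ 1 / 2 := by nlinarith [hβ.2, hε]
    have h3a1 : 3 * a ^ 2 ≤ 1 := by nlinarith [haw.1]
    calc (3 * a ^ 2) ^ (q - 1) * (3 * a ^ 2) = (3 * a ^ 2) ^ (q - 1 + 1) := by
          rw [Real.rpow_add_one (ne_of_gt h3a)]
      _ = (3 * a ^ 2) ^ q := by norm_num
      _ ≤ 1 := Real.rpow_le_one (le_of_lt h3a) h3a1 (by linarith)
      _ ≤ _ := hRHS1
  · by_cases hI1 : I.card = 1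
    · obtain ⟨r₀, rfl⟩ := Finset.card_eq_one.1 hI1
      have hcompl : ({r₀} : Finset (Fin 3))ᶜ.card = 2 := by
        rw [Finset.card_compl]
        simp
      have hterm0 : CR w c m r₀ ({r₀} : Finset (Fin 3)) = c ^ 2 * (β ^ 2) ^ 2 := by
        have hr0 : r₀ ∉ ({r₀} : Finset (Fin 3))ᶜ := by simp
        rw [CR, Finset.prod_congr rfl fun k _ => hwSr r₀ k, prod_ite_of_not_mem hr0, hcompl]
      have hterm : ∀ r : Fin 3, r ≠ r₀ →
          CR w c m r ({r₀} : Finset (Fin 3)) = c ^ 2 * (a * β) ^ 2 := by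
        intro r hr
        have hrmem : r ∈ ({r₀} : Finset (Fin 3))ᶜ := by simp [hr]
        rw [CR, Finset.prod_congr rfl fun k _ => hwSr r k, prod_ite_of_mem hrmem, hcompl]
        norm_num
      have hexp0 : 3 - (insert r₀ ({r₀} : Finset (Fin 3))).card = 2 := by simp
      have hexp : ∀ r : Fin 3, r ≠ r₀ →
          3 - (insert r ({r₀} : Finset (Fin 3))).card = 1 := by
        intro r hr
        rw [Finset.card_insert_of_notMem (by simp [hr])]
        simp
      have hmain : c ^ 2 * (β ^ 2) ^ 2 * (L : ℝ) ^ 2 = 1 := key1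
      have h2 : a ^ 2 ≤ ε ^ 2 * β ^ 2 := by nlinarith [haw.1, hβ.1, hε]
      have hsmall : c ^ 2 * (a * β) ^ 2 * (L : ℝ) ≤ ε ^ 2 := by
        have heq : c ^ 2 * β ^ 4 * (L : ℝ) * (L : ℝ) = 1 := by linear_combination key1
        have ht0 : 0 ≤ c ^ 2 * β ^ 4 * (L : ℝ) := by positivity
        have h1 : c ^ 2 * β ^ 4 * (L : ℝ) ≤ 1 := by
          calc c ^ 2 * β ^ 4 * (L : ℝ) = c ^ 2 * β ^ 4 * (L : ℝ) * 1 := by ring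
            _ ≤ c ^ 2 * β ^ 4 * (L : ℝ) * (L : ℝ) := mul_le_mul_of_nonneg_left hL1 ht0
            _ = 1 := heq
        calc c ^ 2 * (a * β) ^ 2 * (L : ℝ) = a ^ 2 * (c ^ 2 * β ^ 2 * (L : ℝ)) := by ring
          _ ≤ (ε ^ 2 * β ^ 2) * (c ^ 2 * β ^ 2 * (L : ℝ)) :=
              mul_le_mul_of_nonneg_right h2 (by positivity)
          _ = ε ^ 2 * (c ^ 2 * β ^ 4 * (L : ℝ)) := by ring
          _ ≤ ε ^ 2 * 1 := mul_le_mul_of_nonneg_left h1 (by positivity)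
          _ = ε ^ 2 := mul_one _
      have hsmall2 : c ^ 2 * (a * β) ^ 2 * (L : ℝ) ^ 2 ≤ ε ^ 2 := by
        calc c ^ 2 * (a * β) ^ 2 * (L : ℝ) ^ 2
            = a ^ 2 * (c ^ 2 * β ^ 2 * (L : ℝ) ^ 2) := by ring
          _ ≤ (ε ^ 2 * β ^ 2) * (c ^ 2 * β ^ 2 * (L : ℝ) ^ 2) :=
              mul_le_mul_of_nonneg_right h2 (by positivity)
          _ = ε ^ 2 * (c ^ 2 * (β ^ 2) ^ 2 * (L : ℝ) ^ 2) := by ring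
          _ = ε ^ 2 := by rw [key1, mul_one]
      -- bound the two sums by 1 + 2 ε²
      have hsumM : (∑ r : Fin 3, CR w c m r ({r₀} : Finset (Fin 3))
          * (L : ℝ) ^ (3 - (insert r ({r₀} : Finset (Fin 3))).card)) ≤ 1 + 2 * ε ^ 2 := by
        rw [← Finset.add_sum_erase Finset.univ _ (Finset.mem_univ r₀)]
        have hr0term : CR w c m r₀ ({r₀} : Finset (Fin 3))
            * (L : ℝ) ^ (3 - (insert r₀ ({r₀} : Finset (Fin 3))).card) = 1 := by
          rw [hterm0, hexp0]; exact hmain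
        rw [hr0term]
        have herase : ∀ r ∈ Finset.univ.erase r₀,
            CR w c m r ({r₀} : Finset (Fin 3))
              * (L : ℝ) ^ (3 - (insert r ({r₀} : Finset (Fin 3))).card) ≤ ε ^ 2 := by
          intro r hr
          have hrne := Finset.ne_of_mem_erase hr
          rw [hterm r hrne, hexp r hrne, pow_one]
          exact hsmall
        have hcarderase : (Finset.univ.erase r₀).card = 2 := by
          rw [Finset.card_erase_of_mem (Finset.mem_univ r₀)]
          simp
        have := Finset.sum_le_card_nsmul _ _ _ herase
        rw [hcarderase] at this
        simp only [nsmul_eq_mul] at this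
        push_cast at this
        linarith
      have hsumT : (∑ r : Fin 3, CR w c m r ({r₀} : Finset (Fin 3)) * (L : ℝ) ^ 2)
          ≤ 1 + 2 * ε ^ 2 := by
        rw [← Finset.add_sum_erase Finset.univ _ (Finset.mem_univ r₀)]
        have hr0term : CR w c m r₀ ({r₀} : Finset (Fin 3)) * (L : ℝ) ^ 2 = 1 := by
          rw [hterm0]; exact hmain
        rw [hr0term]
        have herase : ∀ r ∈ Finset.univ.erase r₀,
            CR w c m r ({r₀} : Finset (Fin 3)) * (L : ℝ) ^ 2 ≤ ε ^ 2 := by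
          intro r hr
          have hrne := Finset.ne_of_mem_erase hr
          rw [hterm r hrne]
          exact hsmall2
        have hcarderase : (Finset.univ.erase r₀).card = 2 := by
          rw [Finset.card_erase_of_mem (Finset.mem_univ r₀)]
          simp
        have := Finset.sum_le_card_nsmul _ _ _ herase
        rw [hcarderase] at this
        simp only [nsmul_eq_mul] at this
        push_cast at this
        linarith
      have hMnn : (0 : ℝ) ≤ ∑ r : Fin 3, CR w c m r ({r₀} : Finset (Fin 3))
          * (L : ℝ) ^ (3 - (insert r ({r₀} : Finset (Fin 3))).card) := by
        refine Finset.sum_nonneg fun r _ => ?_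
        have : 0 ≤ CR w c m r ({r₀} : Finset (Fin 3)) := by rw [CR]; positivity
        positivity
      calc (∑ r : Fin 3, CR w c m r ({r₀} : Finset (Fin 3))
              * (L : ℝ) ^ (3 - (insert r ({r₀} : Finset (Fin 3))).card)) ^ (q - 1)
            * (∑ r : Fin 3, CR w c m r ({r₀} : Finset (Fin 3)) * (L : ℝ) ^ 2)
          ≤ (1 + 2 * ε ^ 2) ^ (q - 1) * (1 + 2 * ε ^ 2) := by
            refine mul_le_mul (Real.rpow_le_rpow hMnn hsumM (by linarith)) hsumT ?_ ?_
            · refine Finset.sum_nonneg fun r _ => ?_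
              have : 0 ≤ CR w c m r ({r₀} : Finset (Fin 3)) := by rw [CR]; positivity
              positivity
            · positivity
        _ = (1 + 2 * ε ^ 2) ^ (q - 1 + 1) := by
            rw [Real.rpow_add_one (by positivity)]
        _ = (1 + 2 * ε ^ 2) ^ q := by norm_num
    · -- I.card ≥ 2
      have hI2 : 2 ≤ I.card := by
        have h0 : I.card ≠ 0 := fun h => hI0 (Finset.card_eq_zero.1 h)
        omega
      have hCRle : ∀ r : Fin 3, CR w c m r I ≤ c ^ 2 := by
        intro r
        rw [CR]
        have hp1 : (∏ k ∈ Iᶜ, wS w m r k) ≤ 1 := by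
          refine Finset.prod_le_one (fun k _ => ?_) (fun k _ => ?_)
          · rw [wS]; split <;> [exact (hw m).1.le; exact (hw 0).1.le]
          · rw [wS]; split <;> [exact (hw m).2; exact (hw 0).2]
        have hp0 : (0 : ℝ) ≤ ∏ k ∈ Iᶜ, wS w m r k := by
          refine Finset.prod_nonneg fun k _ => ?_
          rw [wS]; split <;> [exact (hw m).1.le; exact (hw 0).1.le]
        have hP2 : (∏ k ∈ Iᶜ, wS w m r k) ^ 2 ≤ 1 := by nlinarith
        calc c ^ 2 * (∏ k ∈ Iᶜ, wS w m r k) ^ 2 ≤ c ^ 2 * 1 :=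
              mul_le_mul_of_nonneg_left hP2 (sq_nonneg c)
          _ = c ^ 2 := mul_one _
      have hexp : ∀ r : Fin 3, (L : ℝ) ^ (3 - (insert r I).card) ≤ (L : ℝ) := by
        intro r
        have h1 : 3 - (insert r I).card ≤ 1 := by
          have := Finset.card_le_card (Finset.subset_insert r I)
          omega
        calc (L : ℝ) ^ (3 - (insert r I).card) ≤ (L : ℝ) ^ 1 :=
              pow_le_pow_right₀ hL1 h1
          _ = (L : ℝ) := pow_one _
      have hCRnn : ∀ r : Fin 3, 0 ≤ CR w c m r I := by
        intro r; rw [CR]; positivity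
      have hsumM : (∑ r : Fin 3, CR w c m r I * (L : ℝ) ^ (3 - (insert r I).card))
          ≤ 3 * (c ^ 2 * (L : ℝ)) := by
        have hb : ∀ r ∈ Finset.univ, CR w c m r I * (L : ℝ) ^ (3 - (insert r I).card)
            ≤ c ^ 2 * (L : ℝ) := by
          intro r _
          have := mul_le_mul (hCRle r) (hexp r) (by positivity) (by positivity)
          exact this
        have := Finset.sum_le_card_nsmul _ _ _ hb
        simp only [Finset.card_univ, Fintype.card_fin, nsmul_eq_mul] at this
        push_cast at this
        linarith
      have hsumT : (∑ r : Fin 3, CR w c m r I * (L : ℝ) ^ 2)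
          ≤ 3 * (c ^ 2 * (L : ℝ) ^ 2) := by
        have hb : ∀ r ∈ Finset.univ, CR w c m r I * (L : ℝ) ^ 2
            ≤ c ^ 2 * (L : ℝ) ^ 2 := by
          intro r _
          exact mul_le_mul_of_nonneg_right (hCRle r) (by positivity)
        have := Finset.sum_le_card_nsmul _ _ _ hb
        simp only [Finset.card_univ, Fintype.card_fin, nsmul_eq_mul] at this
        push_cast at this
        linarith
      have hMnn : (0 : ℝ) ≤ ∑ r : Fin 3, CR w c m r I * (L : ℝ) ^ (3 - (insert r I).card) :=
        Finset.sum_nonneg fun r _ => mul_nonneg (hCRnn r) (by positivity)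
      have hTnn : (0 : ℝ) ≤ ∑ r : Fin 3, CR w c m r I * (L : ℝ) ^ 2 :=
        Finset.sum_nonneg fun r _ => mul_nonneg (hCRnn r) (by positivity)
      calc (∑ r : Fin 3, CR w c m r I * (L : ℝ) ^ (3 - (insert r I).card)) ^ (q - 1)
            * (∑ r : Fin 3, CR w c m r I * (L : ℝ) ^ 2)
          ≤ (3 * (c ^ 2 * (L : ℝ))) ^ (q - 1) * (3 * (c ^ 2 * (L : ℝ) ^ 2)) := by
            refine mul_le_mul (Real.rpow_le_rpow hMnn hsumM (by linarith)) hsumT hTnn ?_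
            positivity
        _ ≤ ε := hcond
        _ ≤ 1 := by linarith
        _ ≤ _ := hRHS1

/-! ### The bound on the `Y`-norm -/

lemma CR_nonneg (w : ℕ → ℝ) (c : ℝ) (m : ℕ) (r : Fin 3) (I : Finset (Fin 3)) :
    0 ≤ CR w c m r I := by
  rw [CR]; positivity

lemma sum_ofReal_CR (w : ℕ → ℝ) (c : ℝ) (m L : ℕ) (I : Finset (Fin 3)) (e : Fin 3 → ℕ) :
    (∑ r : Fin 3, ENNReal.ofReal (CR w c m r I) * (L : ℝ≥0∞) ^ (e r))
      = ENNReal.ofReal (∑ r : Fin 3, CR w c m r I * (L : ℝ) ^ (e r)) := by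
  rw [ENNReal.ofReal_sum_of_nonneg
    (fun r _ => mul_nonneg (CR_nonneg w c m r I) (by positivity))]
  refine Finset.sum_congr rfl fun r _ => ?_
  rw [ENNReal.ofReal_mul (CR_nonneg w c m r I), ENNReal.ofReal_pow (by positivity),
    ENNReal.ofReal_natCast]

lemma Ynorm_le {w : ℕ → ℝ} {m L : ℕ} {p ε : ℝ}
    (hw : IsWeight w) (hm : m ≠ 0) (hp : 2 < p) (hε : 0 < ε) (hε2 : ε ≤ 1 / 2)
    (ha : w m ≤ ε * w 0) (hL1 : 1 ≤ (L : ℝ))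
    (hcond : (3 * (((w 0 ^ 2 * (L : ℝ))⁻¹) ^ 2 * (L : ℝ))) ^ (p / 2 - 1)
        * (3 * (((w 0 ^ 2 * (L : ℝ))⁻¹) ^ 2 * (L : ℝ) ^ 2)) ≤ ε) :
    Ynorm p w 3 (xx ((w 0 ^ 2 * (L : ℝ))⁻¹) m L)
      ≤ ENNReal.ofReal ((1 + 2 * ε ^ 2) ^ ((1 : ℝ) / 2)) := by
  have hp0 : (0 : ℝ) < p := by linarith
  have hq1 : (1 : ℝ) < p / 2 := by linarith
  have hL0 : 0 < L := by exact_mod_cast lt_of_lt_of_le zero_lt_one hL1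
  set c : ℝ := (w 0 ^ 2 * (L : ℝ))⁻¹ with hcdef
  have hRHSnn : (0 : ℝ) ≤ 1 + 2 * ε ^ 2 := by positivity
  rw [Ynorm, famNorm]
  refine iSup₂_le ?_
  rintro PW ⟨I, rfl⟩
  show pwNorm p (PI I) (WI w I) (xx c m L) ≤ _
  rw [pwNorm]
  have hMR := numeric_bound (L := L) hw hq1 hε hε2 ha hL1 hcond I
  set MR : ℝ := ∑ r : Fin 3, CR w c m r I * (L : ℝ) ^ (3 - (insert r I).card) with hMRdef
  set TR : ℝ := ∑ r : Fin 3, CR w c m r I * (L : ℝ) ^ 2 with hTRdef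
  have hMRnn : 0 ≤ MR :=
    Finset.sum_nonneg fun r _ => mul_nonneg (CR_nonneg w c m r I) (by positivity)
  have hTRnn : 0 ≤ TR :=
    Finset.sum_nonneg fun r _ => mul_nonneg (CR_nonneg w c m r I) (by positivity)
  have hblock : ∀ N : (PI I : Set (Set (BIdx 3))),
      ∑' j : (N : Set (BIdx 3)), ENNReal.ofReal
        ((xx c m L j) ^ 2 * (WI w I j) ^ 2) ≤ ENNReal.ofReal MR := by
    intro N
    refine le_trans (inner_le hm hL0 I I N.2) ?_
    rw [sum_ofReal_CR w c m L I (fun r => 3 - (insert r I).card)]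
  have htot : ∑' j : BIdx 3, ENNReal.ofReal ((xx c m L j) ^ 2 * (WI w I j) ^ 2)
      ≤ ENNReal.ofReal TR := by
    refine le_trans (total_le hm hL0 I) ?_
    rw [sum_ofReal_CR w c m L I (fun _ => 2)]
  have hF : (∑' N : (PI I : Set (Set (BIdx 3))),
      (∑' j : (N : Set (BIdx 3)), ENNReal.ofReal
        ((xx c m L j) ^ 2 * (WI w I j) ^ 2)) ^ (p / 2))
      ≤ ENNReal.ofReal ((1 + 2 * ε ^ 2) ^ (p / 2)) := by
    calc (∑' N : (PI I : Set (Set (BIdx 3))),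
        (∑' j : (N : Set (BIdx 3)), ENNReal.ofReal
          ((xx c m L j) ^ 2 * (WI w I j) ^ 2)) ^ (p / 2))
        ≤ ENNReal.ofReal MR ^ (p / 2 - 1)
            * ∑' j : BIdx 3, ENNReal.ofReal ((xx c m L j) ^ 2 * (WI w I j) ^ 2) :=
          powsum_le _ (PI_pairwiseDisjoint I) _ (le_of_lt hq1) ENNReal.ofReal_ne_top hblock
      _ ≤ ENNReal.ofReal MR ^ (p / 2 - 1) * ENNReal.ofReal TR :=
          mul_le_mul' le_rfl htot
      _ = ENNReal.ofReal (MR ^ (p / 2 - 1) * TR) := by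
          rw [ENNReal.ofReal_rpow_of_nonneg hMRnn (by linarith), ← ENNReal.ofReal_mul
            (Real.rpow_nonneg hMRnn _)]
      _ ≤ ENNReal.ofReal ((1 + 2 * ε ^ 2) ^ (p / 2)) := ENNReal.ofReal_le_ofReal hMR
  calc (∑' N : (PI I : Set (Set (BIdx 3))),
      (∑' j : (N : Set (BIdx 3)), ENNReal.ofReal
        ((xx c m L j) ^ 2 * (WI w I j) ^ 2)) ^ (p / 2)) ^ (1 / p)
      ≤ (ENNReal.ofReal ((1 + 2 * ε ^ 2) ^ (p / 2))) ^ (1 / p) :=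
        ENNReal.rpow_le_rpow hF (by positivity)
    _ = ENNReal.ofReal ((1 + 2 * ε ^ 2) ^ ((1 : ℝ) / 2)) := by
        have hpne : p ≠ 0 := ne_of_gt hp0
        have hexp : p / 2 * (1 / p) = 1 / 2 := by field_simp <;> ring
        rw [ENNReal.ofReal_rpow_of_nonneg (Real.rpow_nonneg hRHSnn _) (by positivity),
          ← Real.rpow_mul hRHSnn, hexp]

/-! ### The envelope pair -/

/-- Coarse blocks for the envelope construction. -/
def qq (m : ℕ) (r : Fin 3) : Set (BIdx 3) :=
  {i | (i r).1 = m ∧ ∀ k, k ≠ r → (i k).1 = 0}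

/-- The remainder block. -/
def RR (m : ℕ) : Set (BIdx 3) := (⋃ r, qq m r)ᶜ

/-- The coarse partition. -/
def QQ (m : ℕ) : Set (Set (BIdx 3)) := insert (RR m) (Set.range (qq m))

open scoped Classical in
noncomputable def JJ (m : ℕ) : Set (BIdx 3) → Finset (Fin 3) := fun s =>
  if h : ∃ r, s = qq m r then {h.choose} else ∅

/-- Choice of partition–weight pair for each coarse block. -/
def TT (w : ℕ → ℝ) (m : ℕ) : Set (BIdx 3) → PWPair (BIdx 3) := fun s =>
  (PI (JJ m s), WI w (JJ m s))

/-- Canonical point of the `r`-th piece. -/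
def pt (m : ℕ) (r : Fin 3) : BIdx 3 := fun k => if k = r then (m, 0) else (0, 0)

lemma pt_mem_qq (m : ℕ) (r : Fin 3) : pt m r ∈ qq m r := by
  constructor
  · simp [pt]
  · intro k hk
    simp [pt, hk]

lemma pt_mem_SS {m L : ℕ} (hL : 0 < L) (r : Fin 3) : pt m r ∈ SS m L r := by
  constructor
  · simp [pt]
  · intro k hk
    simp [pt, hk, hL]

lemma mem_qq_not {m : ℕ} (hm : m ≠ 0) {r r' : Fin 3} (h : r ≠ r') {i : BIdx 3}
    (hi : i ∈ qq m r) : i ∉ qq m r' := by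
  intro hi'
  exact hm ((hi.1.symm.trans (hi'.2 r h)).symm ▸ rfl)

lemma qq_ne {m : ℕ} (hm : m ≠ 0) {r r' : Fin 3} (h : r ≠ r') : qq m r ≠ qq m r' := by
  intro he
  exact mem_qq_not hm h (pt_mem_qq m r) (he ▸ pt_mem_qq m r)

lemma SS_sub_qq {m L : ℕ} (r : Fin 3) : SS m L r ⊆ qq m r := by
  intro i hi
  exact ⟨by rw [hi.1], fun k hk => (hi.2 k hk).1⟩

/-- The three distinguished blocks of the envelope partition. -/
def KK (m : ℕ) (r : Fin 3) : Set (BIdx 3) := qq m r ∩ {i : BIdx 3 | i r = (m, 0)}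

lemma SS_sub_KK {m L : ℕ} (r : Fin 3) : SS m L r ⊆ KK m r :=
  fun i hi => ⟨SS_sub_qq r hi, hi.1⟩

lemma QQ_partition {m : ℕ} (hm : m ≠ 0) : IsPartition (QQ m) := by
  refine ⟨?_, ?_, ?_⟩
  · rintro N (rfl | ⟨r, rfl⟩)
    · refine ⟨fun _ => (m, 0), ?_⟩
      rw [RR]
      intro hmem
      obtain ⟨r, hr⟩ := Set.mem_iUnion.1 (by simpa using hmem)
      obtain ⟨k, hk⟩ := exists_ne r
      exact hm (hr.2 k hk)
    · exact ⟨pt m r, pt_mem_qq m r⟩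
  · rintro N (rfl | ⟨r, rfl⟩) N' (rfl | ⟨r', rfl⟩) hne
    · exact absurd rfl hne
    · refine Set.disjoint_left.2 fun i hi hi' => ?_
      exact hi (Set.mem_iUnion.2 ⟨r', hi'⟩)
    · refine Set.disjoint_left.2 fun i hi hi' => ?_
      exact hi' (Set.mem_iUnion.2 ⟨r, hi⟩)
    · have hrr : r ≠ r' := fun he => hne (by rw [he])
      exact Set.disjoint_left.2 fun i hi hi' => mem_qq_not hm hrr hi hi'
  · ext i
    simp only [Set.mem_sUnion, Set.mem_univ, iff_true]
    by_cases h : i ∈ ⋃ r, qq m r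
    · obtain ⟨r, hr⟩ := Set.mem_iUnion.1 h
      exact ⟨qq m r, Set.mem_insert_of_mem _ ⟨r, rfl⟩, hr⟩
    · exact ⟨RR m, Set.mem_insert _ _, h⟩

open scoped Classical in
lemma JJ_qq {m : ℕ} (hm : m ≠ 0) (r : Fin 3) : JJ m (qq m r) = {r} := by
  rw [JJ]
  have h : ∃ r', qq m r = qq m r' := ⟨r, rfl⟩
  rw [dif_pos h]
  congr 1
  by_contra hne
  exact qq_ne hm (fun he => hne he.symm) h.choose_spec

lemma blockOf_SS {m L : ℕ} (hm : m ≠ 0) {r : Fin 3} {i : BIdx 3} (hi : i ∈ SS m L r) :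
    blockOf (QQ m) i = qq m r := by
  rw [blockOf]
  have hset : {q ∈ QQ m | i ∈ q} = {qq m r} := by
    ext q
    simp only [Set.mem_setOf_eq, Set.mem_singleton_iff]
    constructor
    · rintro ⟨(rfl | ⟨r', rfl⟩), hiq⟩
      · exact absurd (Set.mem_iUnion.2 ⟨r, SS_sub_qq r hi⟩) hiq
      · rcases eq_or_ne r' r with rfl | hne
        · rfl
        · exact absurd hiq (mem_qq_not hm hne.symm (SS_sub_qq r hi))
    · rintro rfl
      exact ⟨Set.mem_insert_of_mem _ ⟨r, rfl⟩, SS_sub_qq r hi⟩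
  rw [hset, Set.sUnion_singleton]

lemma envWeight_SS {w : ℕ → ℝ} {m L : ℕ} (hm : m ≠ 0) {r : Fin 3} {i : BIdx 3}
    (hi : i ∈ SS m L r) : envWeight (QQ m) (TT w m) i = w 0 ^ 2 := by
  rw [envWeight, blockOf_SS hm hi]
  show WI w (JJ m (qq m r)) i = w 0 ^ 2
  rw [JJ_qq hm r, WI]
  have hprod : ∀ k ∈ ({r} : Finset (Fin 3))ᶜ, w ((i k).1) = w 0 := by
    intro k hk
    have hkr : k ≠ r := by simpa using hk
    rw [(hi.2 k hkr).1]
  rw [Finset.prod_congr rfl hprod, Finset.prod_const]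
  congr 1
  rw [Finset.card_compl]
  simp

lemma KK_mem_env {w : ℕ → ℝ} {m : ℕ} (hm : m ≠ 0) (r : Fin 3) :
    KK m r ∈ envPartition (QQ m) (TT w m) := by
  refine ⟨⟨pt m r, pt_mem_qq m r, by simp [pt]⟩, qq m r,
    Set.mem_insert_of_mem _ ⟨r, rfl⟩, {i : BIdx 3 | i r = (m, 0)}, ?_, rfl⟩
  show {i : BIdx 3 | i r = (m, 0)} ∈ PI (JJ m (qq m r))
  rw [JJ_qq hm r]
  refine ⟨fun _ => (m, 0), ?_⟩
  ext i
  simp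

lemma KK_ne {m : ℕ} (hm : m ≠ 0) {r r' : Fin 3} (h : r ≠ r') : KK m r ≠ KK m r' := by
  intro he
  have h1 : pt m r ∈ KK m r := ⟨pt_mem_qq m r, by simp [pt]⟩
  rw [he] at h1
  exact mem_qq_not hm h (pt_mem_qq m r) h1.1

/-- The finite part of the support used for the lower bound. -/
def SF (m L : ℕ) (r : Fin 3) : Finset (BIdx 3) :=
  Finset.image (fun l : Fin 3 → ℕ => fun k => if k = r then ((m : ℕ), (0 : ℕ)) else (0, l k))
    (Fintype.piFinset fun k => if k = r then ({0} : Finset ℕ) else Finset.range L)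

lemma SF_sub_SS {m L : ℕ} (r : Fin 3) {j : BIdx 3} (hj : j ∈ SF m L r) :
    j ∈ SS m L r := by
  obtain ⟨l, hl, rfl⟩ := Finset.mem_image.1 hj
  constructor
  · simp
  · intro k hk
    have hlk : l k ∈ Finset.range L := by
      have := Fintype.mem_piFinset.1 hl k
      rwa [if_neg hk] at this
    refine ⟨by simp [hk], ?_⟩
    simp only [if_neg hk]
    exact Finset.mem_range.1 hlk

lemma SF_card {m L : ℕ} (r : Fin 3) : (SF m L r).card = L ^ 2 := by
  classical
  rw [SF, Finset.card_image_of_injOn, Fintype.card_piFinset]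
  · have h1 : ∀ k : Fin 3, (if k = r then ({0} : Finset ℕ) else Finset.range L).card
        = if k = r then 1 else L := by
      intro k
      split <;> simp
    rw [Finset.prod_congr rfl fun k _ => h1 k,
      ← Finset.mul_prod_erase Finset.univ _ (Finset.mem_univ r), if_pos rfl]
    rw [Finset.prod_congr rfl fun k hk => if_neg (Finset.ne_of_mem_erase hk),
      Finset.prod_const, Finset.card_erase_of_mem (Finset.mem_univ r)]
    simp
  · intro l hl l' hl' he
    funext k
    rcases eq_or_ne k r with rfl | hk
    · have h0 : l k ∈ ({0} : Finset ℕ) := by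
        have := Fintype.mem_piFinset.1 hl k
        rwa [if_pos rfl] at this
      have h0' : l' k ∈ ({0} : Finset ℕ) := by
        have := Fintype.mem_piFinset.1 hl' k
        rwa [if_pos rfl] at this
      rw [Finset.mem_singleton.1 h0, Finset.mem_singleton.1 h0']
    · have := congrFun he k
      simp only [if_neg hk, Prod.mk.injEq] at this
      exact this.2

/-! ### Lower bound for the envelope norm -/

lemma inner_KK_ge {w : ℕ → ℝ} {m L : ℕ} (hw : IsWeight w) (hm : m ≠ 0)
    (hL1 : 1 ≤ (L : ℝ)) (r : Fin 3) :
    1 ≤ ∑' j : (KK m r : Set (BIdx 3)),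
      ENNReal.ofReal ((xx ((w 0 ^ 2 * (L : ℝ))⁻¹) m L j) ^ 2
        * (envWeight (QQ m) (TT w m) j) ^ 2) := by
  classical
  set c : ℝ := (w 0 ^ 2 * (L : ℝ))⁻¹ with hcdef
  have hL0r : (0 : ℝ) < L := by linarith
  have hβ := hw 0
  have hβ0 : w 0 ≠ 0 := ne_of_gt hβ.1
  have hL0' : (L : ℝ) ≠ 0 := ne_of_gt hL0r
  rw [tsum_subtype (KK m r) (fun j => ENNReal.ofReal ((xx c m L j) ^ 2
    * (envWeight (QQ m) (TT w m) j) ^ 2))]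
  have hval : ∀ j ∈ SF m L r,
      (KK m r).indicator (fun j => ENNReal.ofReal ((xx c m L j) ^ 2
        * (envWeight (QQ m) (TT w m) j) ^ 2)) j
      = ENNReal.ofReal (c ^ 2 * (w 0 ^ 2) ^ 2) := by
    intro j hj
    have hjSS := SF_sub_SS r hj
    rw [Set.indicator_of_mem (SS_sub_KK r hjSS)]
    rw [xx_of_mem hjSS, envWeight_SS hm hjSS]
  have hkey : c ^ 2 * (w 0 ^ 2) ^ 2 * (L : ℝ) ^ 2 = 1 := by
    rw [hcdef]
    field_simp
  calc (1 : ℝ≥0∞) = ENNReal.ofReal ((L : ℝ) ^ 2 * (c ^ 2 * (w 0 ^ 2) ^ 2)) := by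
        rw [show (L : ℝ) ^ 2 * (c ^ 2 * (w 0 ^ 2) ^ 2)
            = c ^ 2 * (w 0 ^ 2) ^ 2 * (L : ℝ) ^ 2 by ring, hkey]
        simp
    _ = ∑ j ∈ SF m L r, (KK m r).indicator (fun j => ENNReal.ofReal ((xx c m L j) ^ 2
          * (envWeight (QQ m) (TT w m) j) ^ 2)) j := by
        rw [Finset.sum_congr rfl hval, Finset.sum_const, SF_card, nsmul_eq_mul]
        rw [ENNReal.ofReal_mul (by positivity)]
        congr 1
        rw [ENNReal.ofReal_pow (by positivity), ENNReal.ofReal_natCast]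
        push_cast
        rfl
    _ ≤ ∑' j : BIdx 3, (KK m r).indicator (fun j => ENNReal.ofReal ((xx c m L j) ^ 2
          * (envWeight (QQ m) (TT w m) j) ^ 2)) j :=
        ENNReal.sum_le_tsum _

lemma env_ge {w : ℕ → ℝ} {m L : ℕ} {p : ℝ} (hw : IsWeight w) (hm : m ≠ 0)
    (hp : 0 < p) (hL1 : 1 ≤ (L : ℝ)) :
    (3 : ℝ≥0∞) ^ ((1 : ℝ) / p)
      ≤ envNorm p (famYn w 3) (xx ((w 0 ^ 2 * (L : ℝ))⁻¹) m L) := by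
  classical
  set c : ℝ := (w 0 ^ 2 * (L : ℝ))⁻¹ with hcdef
  set x := xx c m L with hxdef
  have hmem : (envPartition (QQ m) (TT w m), envWeight (QQ m) (TT w m))
      ∈ envFam (famYn w 3) :=
    ⟨QQ m, TT w m, QQ_partition hm, fun q _ => ⟨JJ m q, rfl⟩, rfl⟩
  have hge : pwNorm p (envPartition (QQ m) (TT w m)) (envWeight (QQ m) (TT w m)) x
      ≤ envNorm p (famYn w 3) x := by
    rw [envNorm, famNorm]
    exact le_iSup₂_of_le _ hmem le_rfl
  refine le_trans ?_ hge
  rw [pwNorm]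
  refine ENNReal.rpow_le_rpow ?_ (le_of_lt (one_div_pos.2 hp))
  have hterm : ∀ r : Fin 3, (1 : ℝ≥0∞) ≤ (∑' j : (KK m r : Set (BIdx 3)),
      ENNReal.ofReal ((x j) ^ 2 * (envWeight (QQ m) (TT w m) j) ^ 2)) ^ (p / 2) := by
    intro r
    have h2 : (0 : ℝ) < p / 2 := by linarith
    exact ENNReal.one_le_rpow (inner_KK_ge hw hm hL1 r) h2
  let κ : Fin 3 → (envPartition (QQ m) (TT w m) : Set (Set (BIdx 3))) :=
    fun r => ⟨KK m r, KK_mem_env hm r⟩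
  have hκ : ∀ r r' : Fin 3, r ≠ r' → κ r ≠ κ r' :=
    fun r r' h he => KK_ne hm h (congrArg Subtype.val he)
  have h01 : κ 0 ∉ ({κ 1, κ 2} : Finset _) := by
    simp only [Finset.mem_insert, Finset.mem_singleton]
    push_neg
    exact ⟨hκ 0 1 (by decide), hκ 0 2 (by decide)⟩
  have h12 : κ 1 ∉ ({κ 2} : Finset _) := by
    simp only [Finset.mem_singleton]
    exact hκ 1 2 (by decide)
  calc (3 : ℝ≥0∞)
      = ∑ _K ∈ ({κ 0, κ 1, κ 2} : Finset _), (1 : ℝ≥0∞) := by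
        rw [Finset.sum_const, Finset.card_insert_of_notMem h01,
          Finset.card_insert_of_notMem h12, Finset.card_singleton]
        simp
    _ ≤ ∑ K ∈ ({κ 0, κ 1, κ 2} : Finset _),
          (∑' j : (K : Set (BIdx 3)),
            ENNReal.ofReal ((x j) ^ 2 * (envWeight (QQ m) (TT w m) j) ^ 2)) ^ (p / 2) := by
        refine Finset.sum_le_sum fun K hK => ?_
        rcases Finset.mem_insert.1 hK with rfl | hK2
        · exact hterm 0
        rcases Finset.mem_insert.1 hK2 with rfl | hK3
        · exact hterm 1
        rw [Finset.mem_singleton.1 hK3]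
        exact hterm 2
    _ ≤ ∑' K : (envPartition (QQ m) (TT w m) : Set (Set (BIdx 3))),
          (∑' j : (K : Set (BIdx 3)),
            ENNReal.ofReal ((x j) ^ 2 * (envWeight (QQ m) (TT w m) j) ^ 2)) ^ (p / 2) :=
        ENNReal.sum_le_tsum _

lemma xx_ne_zero {c : ℝ} {m L : ℕ} (hc : c ≠ 0) (hL : 0 < L) : xx c m L ≠ 0 := by
  intro h
  have h1 : xx c m L (pt m 0) = c := xx_of_mem (pt_mem_SS hL 0)
  rw [h] at h1
  exact hc (by simpa using h1.symm)

end S16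

/-- For the space `Y_3` on `(ℕ×ℕ)³`, the ratio of the envelope norm
generated by `{(P_I, W_I) : I ⊆ {1,2,3}}` to the `Y_3`-norm has supremum at least
`3^{1/p}` over nonzero elements of `Y_3`. -/
theorem statement16 (p : ℝ) (hp : 2 < p) (w : ℕ → ℝ) (hw : IsWeight w)
    (hw0 : Filter.Tendsto w Filter.atTop (nhds 0)) :
    (3 : ℝ≥0∞) ^ ((1 : ℝ) / p) ≤
      ⨆ (x : BIdx 3 → ℝ) (_ : x ≠ 0) (_ : Ynorm p w 3 x < ⊤),
        envNorm p (famYn w 3) x / Ynorm p w 3 x := by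
  classical
  have hβ := hw 0
  have hβ0 : w 0 ≠ 0 := ne_of_gt hβ.1
  have hp0 : (0 : ℝ) < p := by linarith
  -- Main step: for every small ε we get within a factor of the target.
  have main : ∀ ε : ℝ, 0 < ε → ε ≤ 1 / 2 →
      (3 : ℝ≥0∞) ^ ((1 : ℝ) / p) / ENNReal.ofReal ((1 + 2 * ε ^ 2) ^ ((1 : ℝ) / 2))
        ≤ ⨆ (x : BIdx 3 → ℝ) (_ : x ≠ 0) (_ : Ynorm p w 3 x < ⊤),
            envNorm p (famYn w 3) x / Ynorm p w 3 x := by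
    intro ε hε hε2
    -- choose m with w m < ε * w 0
    have hεβ : (0 : ℝ) < ε * w 0 := mul_pos hε hβ.1
    obtain ⟨m, hm1⟩ := (hw0.eventually (gt_mem_nhds hεβ)).exists
    have hm0 : m ≠ 0 := by
      rintro rfl
      have h1 : ε * w 0 ≤ (1 / 2) * w 0 := mul_le_mul_of_nonneg_right hε2 hβ.1.le
      linarith
    -- choose L large
    set D : ℝ := 3 / (w 0) ^ 4 with hDdef
    have htend1 : Filter.Tendsto (fun L : ℕ => D / (L : ℝ)) Filter.atTop (nhds 0) :=
      tendsto_const_div_atTop_nhds_zero_nat D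
    have hcont : ContinuousAt (fun y : ℝ => y ^ (p / 2 - 1)) 0 :=
      Real.continuousAt_rpow_const 0 _ (Or.inr (by linarith))
    have htend2 : Filter.Tendsto (fun L : ℕ => (D / (L : ℝ)) ^ (p / 2 - 1))
        Filter.atTop (nhds ((0 : ℝ) ^ (p / 2 - 1))) := hcont.tendsto.comp htend1
    rw [Real.zero_rpow (by intro h; linarith [h] : p / 2 - 1 ≠ 0)] at htend2
    have htend3 : Filter.Tendsto (fun L : ℕ => (D / (L : ℝ)) ^ (p / 2 - 1) * D)
        Filter.atTop (nhds 0) := by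
      have := htend2.mul_const D
      rwa [zero_mul] at this
    have hev : ∀ᶠ L : ℕ in Filter.atTop,
        ((D / (L : ℝ)) ^ (p / 2 - 1) * D < ε ∧ 1 ≤ (L : ℝ)) := by
      refine (htend3.eventually (gt_mem_nhds hε)).and ?_
      filter_upwards [Filter.eventually_ge_atTop 1] with L hL
      exact_mod_cast hL
    obtain ⟨L, hψ, hL1⟩ := hev.exists
    have hL0r : (0 : ℝ) < L := by linarith
    have hL0' : (L : ℝ) ≠ 0 := ne_of_gt hL0r
    have hL0 : 0 < L := by exact_mod_cast hL0r
    -- verify the numeric condition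
    have he1 : 3 * (((w 0 ^ 2 * (L : ℝ))⁻¹) ^ 2 * (L : ℝ)) = D / (L : ℝ) := by
      rw [hDdef]
      field_simp
    have he2 : 3 * (((w 0 ^ 2 * (L : ℝ))⁻¹) ^ 2 * (L : ℝ) ^ 2) = D := by
      rw [hDdef]
      field_simp
    have hcond : (3 * (((w 0 ^ 2 * (L : ℝ))⁻¹) ^ 2 * (L : ℝ))) ^ (p / 2 - 1)
        * (3 * (((w 0 ^ 2 * (L : ℝ))⁻¹) ^ 2 * (L : ℝ) ^ 2)) ≤ ε := by
      rw [he1, he2]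
      exact le_of_lt hψ
    -- the vector
    set c : ℝ := (w 0 ^ 2 * (L : ℝ))⁻¹ with hcdef
    have hc0 : c ≠ 0 := by
      rw [hcdef]
      exact inv_ne_zero (ne_of_gt (mul_pos (pow_pos hβ.1 2) hL0r))
    have hYle := S16.Ynorm_le (m := m) (L := L) hw hm0 hp hε hε2 (le_of_lt hm1) hL1 hcond
    have hEge := S16.env_ge (m := m) (L := L) (p := p) hw hm0 hp0 hL1
    have hfin : Ynorm p w 3 (S16.xx c m L) < ⊤ :=
      lt_of_le_of_lt hYle ENNReal.ofReal_lt_top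
    refine le_trans (ENNReal.div_le_div hEge hYle) ?_
    refine le_iSup_of_le (S16.xx c m L) ?_
    refine le_iSup_of_le (S16.xx_ne_zero hc0 hL0) ?_
    exact le_iSup_of_le hfin le_rfl
  -- limit argument
  set S : ℝ≥0∞ := (3 : ℝ≥0∞) ^ ((1 : ℝ) / p) with hSdef
  set en : ℕ → ℝ := fun n => 1 / (2 * ((n : ℝ) + 1)) with hendef
  have hen_pos : ∀ n, 0 < en n := by
    intro n
    rw [hendef]
    positivity
  have hen_half : ∀ n, en n ≤ 1 / 2 := by
    intro n
    rw [hendef]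
    rw [div_le_div_iff₀ (by positivity) (by norm_num)]
    have : (0 : ℝ) ≤ (n : ℝ) := Nat.cast_nonneg n
    linarith
  have hen0 : Filter.Tendsto en Filter.atTop (nhds 0) := by
    have h1 : Filter.Tendsto (fun n : ℕ => (1 / 2 : ℝ) * (1 / ((n : ℝ) + 1)))
        Filter.atTop (nhds ((1 / 2 : ℝ) * 0)) :=
      tendsto_one_div_add_atTop_nhds_zero_nat.const_mul _
    rw [mul_zero] at h1
    refine h1.congr fun n => ?_
    rw [hendef]
    field_simp
  have hrt : Filter.Tendsto (fun n => (1 + 2 * (en n) ^ 2) ^ ((1 : ℝ) / 2))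
      Filter.atTop (nhds 1) := by
    have hbase : Filter.Tendsto (fun n => 1 + 2 * (en n) ^ 2) Filter.atTop (nhds 1) := by
      have h2 : Filter.Tendsto (fun n => 2 * (en n) ^ 2) Filter.atTop (nhds (2 * 0 ^ 2)) :=
        ((hen0.pow 2).const_mul 2)
      have h3 := tendsto_const_nhds (x := (1 : ℝ)) (f := Filter.atTop (α := ℕ)).add h2
      norm_num at h3
      exact h3
    have hone : (1 : ℝ) = (1 : ℝ) ^ ((1 : ℝ) / 2) := (Real.one_rpow _).symm
    have hcont1 : ContinuousAt (fun y : ℝ => y ^ ((1 : ℝ) / 2)) 1 :=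
      Real.continuousAt_rpow_const 1 _ (Or.inl one_ne_zero)
    have := hcont1.tendsto.comp hbase
    rwa [Real.one_rpow] at this
  have hDent : Filter.Tendsto
      (fun n => ENNReal.ofReal ((1 + 2 * (en n) ^ 2) ^ ((1 : ℝ) / 2)))
      Filter.atTop (nhds 1) := by
    have := ENNReal.tendsto_ofReal hrt
    rwa [ENNReal.ofReal_one] at this
  have hdiv : Filter.Tendsto
      (fun n => S / ENNReal.ofReal ((1 + 2 * (en n) ^ 2) ^ ((1 : ℝ) / 2)))
      Filter.atTop (nhds (S / 1)) :=
    ENNReal.Tendsto.div tendsto_const_nhds (Or.inr one_ne_zero) hDent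
      (Or.inl ENNReal.one_ne_top)
  have hfinal := le_of_tendsto hdiv (Filter.Eventually.of_forall fun n =>
    main (en n) (hen_pos n) (hen_half n))
  rwa [div_one] at hfinal
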